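/- Let φ be a skew-morphism of a finite group A and let Π be a set of primes. Then Orbit^Π(φ) = {x ∈ A : every prime dividing the orbit length |O_x| lies in Π} is a φ-invariant subgroup of A containing Fix φ. -/

import Mathlib

/-- A skew-morphism of a group `A`: a permutation `φ` fixing the identity together with
a power function `pi` (a natural-number representative of the `ℤ_n`-valued power function,
`n = orderOf φ`) such that `φ (x * y) = φ x * φ ^ (pi x) y`. -/
structure SkewMorphism (A : Type*) [Group A] where
  toPerm : Equiv.Perm A
  pi : A → ℕ
  map_one' : toPerm 1 = 1
  skew : ∀ x y : A, toPerm (x * y) = toPerm x * (toPerm ^ pi x) y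

/-- The kernel of a skew-morphism: elements where the power function is `1` in `ℤ_n`. -/
def SkewMorphism.ker {A : Type*} [Group A] (S : SkewMorphism A) : Set A :=
  {x : A | S.pi x ≡ 1 [MOD orderOf S.toPerm]}

/-- The core of a skew-morphism: `⋂_{i=1}^{n} φ^i (Ker φ)`. -/
def SkewMorphism.core {A : Type*} [Group A] (S : SkewMorphism A) : Set A :=
  ⋂ i ∈ Finset.Icc 1 (orderOf S.toPerm), (S.toPerm ^ i) '' S.ker

section Aux

variable {A : Type*} [Group A] (S : SkewMorphism A)

lemma SkewMorphism.skew_iterate (x y : A) (k : ℕ) :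
    (⇑S.toPerm)^[k] (x * y) =
      (⇑S.toPerm)^[k] x *
        (⇑S.toPerm)^[∑ j ∈ Finset.range k, S.pi ((⇑S.toPerm)^[j] x)] y := by
  induction k with
  | zero => simp
  | succ k ih =>
    rw [Function.iterate_succ_apply', ih, S.skew, Equiv.Perm.coe_pow,
      ← Function.iterate_add_apply, ← Function.iterate_succ_apply' (⇑S.toPerm) k x,
      Finset.sum_range_succ,
      Nat.add_comm (∑ j ∈ Finset.range k, S.pi ((⇑S.toPerm)^[j] x))]

variable [Fintype A]

lemma SkewMorphism.mem_periodicPts (x : A) : x ∈ Function.periodicPts ⇑S.toPerm := by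
  refine ⟨orderOf S.toPerm, orderOf_pos _, ?_⟩
  show (⇑S.toPerm)^[orderOf S.toPerm] x = x
  rw [Equiv.Perm.iterate_eq_pow, pow_orderOf_eq_one]
  rfl

lemma SkewMorphism.mp_mul_dvd (x y : A) :
    Function.minimalPeriod (⇑S.toPerm) (x * y) ∣
      Function.minimalPeriod (⇑S.toPerm) x * Function.minimalPeriod (⇑S.toPerm) y := by
  set f := ⇑S.toPerm
  set a := Function.minimalPeriod f x with ha
  set b := Function.minimalPeriod f y with hb
  have hax : Function.IsPeriodicPt f a x := Function.isPeriodicPt_minimalPeriod f x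
  have hby : Function.IsPeriodicPt f b y := Function.isPeriodicPt_minimalPeriod f y
  apply Function.IsPeriodicPt.minimalPeriod_dvd
  show f^[a * b] (x * y) = x * y
  rw [S.skew_iterate]
  have hsum : ∀ m : ℕ, ∑ j ∈ Finset.range (m * a), S.pi (f^[j] x) =
      m * ∑ j ∈ Finset.range a, S.pi (f^[j] x) := by
    intro m
    induction m with
    | zero => simp
    | succ m ih =>
      rw [Nat.succ_mul, Finset.sum_range_add, ih, Nat.succ_mul]
      congr 1
      apply Finset.sum_congr rfl
      intro j _
      congr 1
      rw [Nat.add_comm, Function.iterate_add_apply, (hax.const_mul m).eq]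
  have h1 : f^[a * b] x = x := (hax.mul_const b).eq
  have h2 : ∑ j ∈ Finset.range (a * b), S.pi (f^[j] x) =
      b * ∑ j ∈ Finset.range a, S.pi (f^[j] x) := by rw [Nat.mul_comm]; exact hsum b
  rw [h1, h2, (hby.mul_const _).eq]

lemma SkewMorphism.mp_apply (x : A) :
    Function.minimalPeriod (⇑S.toPerm) (S.toPerm x) =
      Function.minimalPeriod (⇑S.toPerm) x :=
  Function.minimalPeriod_apply (S.mem_periodicPts x)

lemma SkewMorphism.mp_one : Function.minimalPeriod (⇑S.toPerm) 1 = 1 := by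
  have h : Function.IsPeriodicPt (⇑S.toPerm) 1 1 := by
    show (⇑S.toPerm)^[1] 1 = 1
    simpa using S.map_one'
  exact Nat.dvd_one.mp h.minimalPeriod_dvd

end Aux

theorem pi_orbits_subgroup {A : Type*} [Group A] [Fintype A] (S : SkewMorphism A)
    (P : Set ℕ) (hP : ∀ p ∈ P, p.Prime) :
    ∃ H : Subgroup A,
      (H : Set A) =
        {x : A | ∀ p : ℕ, p.Prime → p ∣ Function.minimalPeriod (⇑S.toPerm) x → p ∈ P} ∧
      S.toPerm '' (H : Set A) = (H : Set A) ∧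
      {x : A | S.toPerm x = x} ⊆ (H : Set A) := by
  set T := {x : A | ∀ p : ℕ, p.Prime → p ∣ Function.minimalPeriod (⇑S.toPerm) x → p ∈ P}
    with hT
  have hone : (1 : A) ∈ T := by
    intro p hp hdvd
    rw [S.mp_one, Nat.dvd_one] at hdvd
    exact absurd hdvd hp.ne_one
  have hmul : ∀ {x y : A}, x ∈ T → y ∈ T → x * y ∈ T := by
    intro x y hx hy p hp hdvd
    have := hdvd.trans (S.mp_mul_dvd x y)
    rcases (Nat.Prime.dvd_mul hp).mp this with h | h
    · exact hx p hp h
    · exact hy p hp h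
  have hpow : ∀ (x : A), x ∈ T → ∀ k : ℕ, x ^ k ∈ T := by
    intro x hx k
    induction k with
    | zero => simpa using hone
    | succ k ih => rw [pow_succ]; exact hmul ih hx
  have hinv : ∀ x ∈ T, x⁻¹ ∈ T := by
    intro x hx
    have h1 : x * x ^ (orderOf x - 1) = 1 := by
      rw [← pow_succ', Nat.sub_add_cancel (orderOf_pos x), pow_orderOf_eq_one]
    rw [inv_eq_of_mul_eq_one_right h1]
    exact hpow x hx _
  refine ⟨{ carrier := T, one_mem' := hone, mul_mem' := hmul,
            inv_mem' := fun {x} hx => hinv x hx }, rfl, ?_, ?_⟩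
  · apply Set.eq_of_subset_of_subset
    · rintro _ ⟨x, hx, rfl⟩
      intro p hp hdvd
      rw [S.mp_apply] at hdvd
      exact hx p hp hdvd
    · intro x hx
      refine ⟨S.toPerm⁻¹ x, ?_, by simp⟩
      intro p hp hdvd
      apply hx p hp
      have := S.mp_apply (S.toPerm⁻¹ x)
      simp only [Equiv.Perm.inv_def, Equiv.apply_symm_apply] at this
      rw [this]; exact hdvd
  · intro x hx
    intro p hp hdvd
    have h1 : Function.IsPeriodicPt (⇑S.toPerm) 1 x := by
      show (⇑S.toPerm)^[1] x = x
      simpa using hx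
    rw [Nat.dvd_one.mp h1.minimalPeriod_dvd, Nat.dvd_one] at hdvd
    exact absurd hdvd hp.ne_one
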